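/- arXiv:1807.06743 — 5 statements merged into one kernel-verified Lean document; each statement's English description precedes it below -/
import Mathlib

section
/- Let U be an N×N complex unitary matrix, A = diag(a,1,…,1) with a ≠ 0, I'_N = diag(0,1,…,1), and e₁ the first standard basis column vector. For every λ ∈ ℂ with |λ| < 1: (i) the matrix I_N − λ U† I'_N is invertible and (I_N − λ U† I'_N)^{-1} = Σ_{k=0}^∞ λ^k (U† I'_N)^k, the series converging in operator norm; and (ii) λ is an eigenvalue of UA (i.e. det(λ I_N − UA) = 0) if and only if 1 − (λ/a) Σ_{k=0}^∞ λ^k · e₁ᵀ (U† I'_N)^k U† e₁ = 0. -/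
open Matrix

section Aux
open scoped Matrix.Norms.L2Operator

theorem stmt4_aux (N : ℕ) (hN : 0 < N) (U : Matrix (Fin N) (Fin N) ℂ)
    (hU : Uᴴ * U = 1) (a : ℂ) (ha : a ≠ 0)
    (A Ip : Matrix (Fin N) (Fin N) ℂ)
    (hA : A = Matrix.diagonal (fun i => if i = ⟨0, hN⟩ then a else 1))
    (hIp : Ip = Matrix.diagonal (fun i => if i = ⟨0, hN⟩ then 0 else 1))
    (lam : ℂ) (hlam : ‖lam‖ < 1) :
    (IsUnit ((1 : Matrix (Fin N) (Fin N) ℂ) - lam • (Uᴴ * Ip)).det ∧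
      HasSum (fun k : ℕ => lam ^ k • (Uᴴ * Ip) ^ k)
        (((1 : Matrix (Fin N) (Fin N) ℂ) - lam • (Uᴴ * Ip))⁻¹)) ∧
    ((lam • (1 : Matrix (Fin N) (Fin N) ℂ) - U * A).det = 0 ↔
      1 - (lam / a) * ∑' k : ℕ, lam ^ k * (((Uᴴ * Ip) ^ k * Uᴴ) ⟨0, hN⟩ ⟨0, hN⟩) = 0) := by
  haveI : Nonempty (Fin N) := ⟨⟨0, hN⟩⟩
  haveI : CompleteSpace (Matrix (Fin N) (Fin N) ℂ) := FiniteDimensional.complete ℂ _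
  set z : Fin N := ⟨0, hN⟩ with hz
  set M : Matrix (Fin N) (Fin N) ℂ := Uᴴ * Ip with hM
  set x : Matrix (Fin N) (Fin N) ℂ := lam • M with hxdef
  -- norm bound
  have hnU : ‖U‖ = 1 := by
    have h1 : ‖Uᴴ * U‖ = ‖U‖ * ‖U‖ := by
      rw [← Matrix.star_eq_conjTranspose]; exact CStarRing.norm_star_mul_self
    rw [hU, norm_one] at h1
    nlinarith [norm_nonneg U]
  have hIp2 : Ip * Ip = Ip := by
    rw [hIp, diagonal_mul_diagonal]
    refine congrArg Matrix.diagonal (funext fun i => ?_)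
    by_cases h : i = z <;> simp [h]
  have hIpH : Ipᴴ = Ip := by
    rw [hIp, diagonal_conjTranspose]
    refine congrArg Matrix.diagonal (funext fun i => ?_)
    by_cases h : i = z <;> simp [h]
  have hnIp : ‖Ip‖ ≤ 1 := by
    have h1 : ‖Ipᴴ * Ip‖ = ‖Ip‖ * ‖Ip‖ := by
      rw [← Matrix.star_eq_conjTranspose]; exact CStarRing.norm_star_mul_self
    rw [hIpH, hIp2] at h1
    nlinarith [norm_nonneg Ip]
  have hx : ‖x‖ < 1 := by
    calc ‖x‖ = ‖lam‖ * ‖M‖ := norm_smul _ _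
      _ ≤ ‖lam‖ * (‖Uᴴ‖ * ‖Ip‖) := by
          exact mul_le_mul_of_nonneg_left (norm_mul_le _ _) (norm_nonneg _)
      _ ≤ ‖lam‖ * 1 := by
          refine mul_le_mul_of_nonneg_left ?_ (norm_nonneg _)
          rw [Matrix.l2_opNorm_conjTranspose, hnU, one_mul]; exact hnIp
      _ < 1 := by rw [mul_one]; exact hlam
  -- part (i)
  have hxpow : ∀ k : ℕ, x ^ k = lam ^ k • M ^ k := fun k => smul_pow lam M k
  have hUnit : IsUnit ((1 : Matrix (Fin N) (Fin N) ℂ) - x) :=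
    isUnit_one_sub_of_norm_lt_one hx
  have hdetB : IsUnit ((1 : Matrix (Fin N) (Fin N) ℂ) - x).det :=
    (Matrix.isUnit_iff_isUnit_det _).mp hUnit
  have hsum : Summable (fun k : ℕ => x ^ k) := summable_geometric_of_norm_lt_one hx
  have hinv : ((1 : Matrix (Fin N) (Fin N) ℂ) - x)⁻¹ = ∑' k : ℕ, x ^ k :=
    Matrix.inv_eq_right_inv (mul_neg_geom_series x hx)
  have hS : HasSum (fun k : ℕ => x ^ k) (((1 : Matrix (Fin N) (Fin N) ℂ) - x)⁻¹) := by
    rw [hinv]; exact hsum.hasSum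
  have part1 : IsUnit ((1 : Matrix (Fin N) (Fin N) ℂ) - lam • M).det ∧
      HasSum (fun k : ℕ => lam ^ k • M ^ k)
        (((1 : Matrix (Fin N) (Fin N) ℂ) - lam • M)⁻¹) := by
    refine ⟨hdetB, ?_⟩
    simpa only [hxpow] using hS
  refine ⟨part1, ?_⟩
  -- part (ii)
  set B : Matrix (Fin N) (Fin N) ℂ := (1 : Matrix (Fin N) (Fin N) ℂ) - x with hBdef
  set S : Matrix (Fin N) (Fin N) ℂ := B⁻¹ with hSdef
  set X : Matrix (Fin N) (Fin N) ℂ := S * Uᴴ with hXdef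
  set c : ℂ := lam / a with hcdef
  set E : Matrix (Fin N) (Fin N) ℂ := Matrix.diagonal (fun i => if i = z then 1 else 0) with hE
  have hBS : B * S = 1 := Matrix.mul_nonsing_inv B hdetB
  have hUU : U * Uᴴ = 1 := mul_eq_one_comm.mp hU
  have hIpE : Ip + E = 1 := by
    rw [hIp, hE, diagonal_add, ← Matrix.diagonal_one]
    refine congrArg Matrix.diagonal (funext fun i => ?_)
    by_cases h : i = z <;> simp [h]
  -- the tsum is the (z,z) entry of S * Uᴴ
  have hXzz : X z z = ∑' k : ℕ, lam ^ k * ((M ^ k * Uᴴ) z z) := by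
    let L : Matrix (Fin N) (Fin N) ℂ →ₗ[ℂ] ℂ :=
      { toFun := fun T => (T * Uᴴ) z z
        map_add' := by intro T T'; simp [Matrix.add_mul]
        map_smul' := by intro r T; simp [Matrix.smul_mul] }
    have hLcont : Continuous L := LinearMap.continuous_of_finiteDimensional L
    have h2 : HasSum (fun k : ℕ => L (x ^ k)) (L S) :=
      hS.map L hLcont
    have h3 : (fun k : ℕ => L (x ^ k)) = fun k : ℕ => lam ^ k * ((M ^ k * Uᴴ) z z) := by
      funext k
      simp only [L, LinearMap.coe_mk, AddHom.coe_mk, hxpow, Matrix.smul_mul,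
        Matrix.smul_apply, smul_eq_mul]
    rw [h3] at h2
    exact h2.tsum_eq.symm ▸ rfl
  -- key factorization
  have hIpA : Ip * A = Ip := by
    rw [hIp, hA, diagonal_mul_diagonal]
    refine congrArg Matrix.diagonal (funext fun i => ?_)
    by_cases h : i = z <;> simp [h]
  have hEA : E * A = a • E := by
    rw [hE, hA, diagonal_mul_diagonal, ← Matrix.diagonal_smul]
    refine congrArg Matrix.diagonal (funext fun i => ?_)
    by_cases h : i = z <;> simp [h]
  have hca : c * a = lam := div_mul_cancel₀ lam ha
  have hKey : ((-U) * (B - c • (Uᴴ * E))) * A = lam • (1 : Matrix (Fin N) (Fin N) ℂ) - U * A := by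
    have e1 : U * B = U - lam • Ip := by
      rw [hBdef, hxdef, hM, Matrix.mul_sub, Matrix.mul_one, Matrix.mul_smul,
        ← Matrix.mul_assoc, hUU, Matrix.one_mul]
    have e2 : U * (Uᴴ * E) = E := by rw [← Matrix.mul_assoc, hUU, Matrix.one_mul]
    have h1 : (-U) * (B - c • (Uᴴ * E)) = lam • Ip + c • E - U := by
      rw [Matrix.neg_mul, Matrix.mul_sub, Matrix.mul_smul, e1, e2]
      abel
    rw [h1, Matrix.sub_mul, Matrix.add_mul, Matrix.smul_mul, Matrix.smul_mul, hIpA, hEA,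
      smul_smul, hca, ← smul_add, hIpE]
  -- second factorization
  have hKey2 : B - c • (Uᴴ * E) = B * ((1 : Matrix (Fin N) (Fin N) ℂ) - c • (X * E)) := by
    rw [Matrix.mul_sub, Matrix.mul_one, Matrix.mul_smul, hXdef,
      Matrix.mul_assoc S Uᴴ E, ← Matrix.mul_assoc B S (Uᴴ * E), hBS, Matrix.one_mul]
  -- matrix determinant lemma
  have hdet3 : ((1 : Matrix (Fin N) (Fin N) ℂ) - c • (X * E)).det = 1 - c * X z z := by
    have hcol : (1 : Matrix (Fin N) (Fin N) ℂ) - c • (X * E) =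
        1 + Matrix.replicateCol Unit (fun i => -(c * X i z)) *
            Matrix.replicateRow Unit (fun j => if j = z then (1 : ℂ) else 0) := by
      have colrow : Matrix.replicateCol Unit (fun i => -(c * X i z)) *
          Matrix.replicateRow Unit (fun j => if j = z then (1 : ℂ) else 0) =
          Matrix.of fun i j => -(c * X i z) * (if j = z then (1 : ℂ) else 0) := by
        ext i j
        simp [Matrix.mul_apply]
      ext i j
      rw [colrow]
      simp only [Matrix.sub_apply, Matrix.add_apply, Matrix.smul_apply, smul_eq_mul, hE,
        Matrix.mul_diagonal, Matrix.of_apply]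
      by_cases h : j = z
      · subst h; ring
      · simp [h]
    rw [hcol, Matrix.det_one_add_replicateCol_mul_replicateRow]
    simp [dotProduct, ite_mul]
    ring
  -- combine determinants
  have hdetU : (-U).det * (-Uᴴ).det = 1 := by
    rw [← Matrix.det_mul, Matrix.neg_mul, Matrix.mul_neg, neg_neg, hUU, Matrix.det_one]
  have hdetUne : (-U).det ≠ 0 := by
    intro h
    rw [h, zero_mul] at hdetU
    exact zero_ne_one hdetU
  have hdetA : A.det = a := by
    rw [hA, Matrix.det_diagonal]
    rw [Finset.prod_ite_eq' Finset.univ z (fun _ => a)]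
    simp
  have hdetBne : B.det ≠ 0 := hdetB.ne_zero
  have hchain : (lam • (1 : Matrix (Fin N) (Fin N) ℂ) - U * A).det =
      (-U).det * (B.det * (1 - c * X z z)) * a := by
    rw [← hKey, Matrix.det_mul, Matrix.det_mul, hKey2, Matrix.det_mul, hdet3, hdetA]
  rw [hchain]
  constructor
  · intro h
    rcases mul_eq_zero.mp h with h' | h'
    · rcases mul_eq_zero.mp h' with h'' | h''
      · exact absurd h'' hdetUne
      · rcases mul_eq_zero.mp h'' with h3 | h3
        · exact absurd h3 hdetBne
        · rw [← hXzz]; exact h3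
    · exact absurd h' ha
  · intro h
    rw [← hXzz] at h
    rw [h]
    simp

end Aux

/-- For `|λ| < 1`: (i) `I − λ U† I'` is invertible with inverse given by the
(operator-norm convergent, equivalently entrywise convergent) geometric series
`Σ_k λ^k (U† I')^k`; (ii) `λ` is an eigenvalue of `UA` iff
`1 − (λ/a) Σ_k λ^k e₁ᵀ (U† I')^k U† e₁ = 0`. -/
theorem stmt4 (N : ℕ) (hN : 0 < N) (U : Matrix (Fin N) (Fin N) ℂ)
    (hU : Uᴴ * U = 1) (a : ℂ) (ha : a ≠ 0)
    (A Ip : Matrix (Fin N) (Fin N) ℂ)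
    (hA : A = Matrix.diagonal (fun i => if i = ⟨0, hN⟩ then a else 1))
    (hIp : Ip = Matrix.diagonal (fun i => if i = ⟨0, hN⟩ then 0 else 1))
    (lam : ℂ) (hlam : ‖lam‖ < 1) :
    (IsUnit ((1 : Matrix (Fin N) (Fin N) ℂ) - lam • (Uᴴ * Ip)).det ∧
      HasSum (fun k : ℕ => lam ^ k • (Uᴴ * Ip) ^ k)
        (((1 : Matrix (Fin N) (Fin N) ℂ) - lam • (Uᴴ * Ip))⁻¹)) ∧
    ((lam • (1 : Matrix (Fin N) (Fin N) ℂ) - U * A).det = 0 ↔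
      1 - (lam / a) * ∑' k : ℕ, lam ^ k * (((Uᴴ * Ip) ^ k * Uᴴ) ⟨0, hN⟩ ⟨0, hN⟩) = 0) :=
  stmt4_aux N hN U hU a ha A Ip hA hIp lam hlam
end

section
/- Fix μ ∈ ℂ with μ ≠ 0 and z ∈ ℂ with 0 < |z| < 1. For each integer N ≥ 2 set t_N = 1/(|μ|² N) and define ρ_N(z) = (1/π) · ( (|z|² − t_N)^{N−2} / ( (1 − t_N)^{N−1} |z|^{2N} ) ) · ( (N−1)(|z|^{2N} + t_N) + Σ_{k=0}^{N−2} ( (N−2−k) + k·t_N ) |z|^{2(N−1−k)} ). Then lim_{N→∞} ρ_N(z) = (1/(π (1 − |z|²)²)) · exp( (1/|μ|²)(1 − 1/|z|²) ) · ( 1 + (1 − |z|²)/( |μ|² |z|⁴ ) ). -/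
open Filter Finset

lemma aux_pow_exp (c : ℝ) (k : ℕ) :
    Tendsto (fun N : ℕ => (1 + c / N) ^ (N - k)) atTop (nhds (Real.exp c)) := by
  have h1 := Real.tendsto_one_add_div_pow_exp c
  have hb : Tendsto (fun N : ℕ => (1 : ℝ) + c / N) atTop (nhds 1) := by
    simpa using tendsto_const_nhds.add (tendsto_const_div_atTop_nhds_zero_nat c)
  have h2 : Tendsto (fun N : ℕ => ((1 : ℝ) + c / N) ^ k) atTop (nhds 1) := by
    simpa using hb.pow k
  have h3 := h1.div h2 one_ne_zero
  rw [div_one] at h3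
  refine h3.congr' ?_
  filter_upwards [eventually_ge_atTop k, eventually_gt_atTop (⌈|c|⌉₊), eventually_gt_atTop 0]
    with N hk hc hN0
  have hN0' : 0 < (N : ℝ) := by exact_mod_cast hN0
  have hx : (1 : ℝ) + c / N ≠ 0 := by
    have h1 : |c| < N := by
      calc |c| ≤ ⌈|c|⌉₊ := Nat.le_ceil _
      _ < N := by exact_mod_cast hc
    have : |c / N| < 1 := by
      rw [abs_div, abs_of_pos hN0', div_lt_one hN0']; exact h1
    have := abs_lt.mp this
    linarith [this.1]
  rw [pow_sub₀ _ hx hk]; rfl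

/-- Pointwise limit, as `N → ∞`, of the finite-`N` eigenvalue density
`ρ_N(z)` (with `t_N = 1/(|μ|²N)`) to the limiting density
`(1/(π(1−|z|²)²)) e^{(1/|μ|²)(1−1/|z|²)} (1 + (1−|z|²)/(|μ|²|z|⁴))`. -/
theorem stmt5 (μ z : ℂ) (hμ : μ ≠ 0)
    (hz0 : 0 < ‖z‖) (hz1 : ‖z‖ < 1) :
    Tendsto (fun N : ℕ =>
      (1 / Real.pi) *
        ((‖z‖ ^ 2 - 1 / (‖μ‖ ^ 2 * N)) ^ (N - 2) /
          ((1 - 1 / (‖μ‖ ^ 2 * N)) ^ (N - 1) * ‖z‖ ^ (2 * N))) *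
        (((N : ℝ) - 1) * (‖z‖ ^ (2 * N) + 1 / (‖μ‖ ^ 2 * N)) +
          ∑ k ∈ Finset.range (N - 1),
            (((N : ℝ) - 2 - (k : ℝ)) + (k : ℝ) * (1 / (‖μ‖ ^ 2 * N))) *
              ‖z‖ ^ (2 * (N - 1 - k))))
      atTop
      (nhds ((1 / (Real.pi * (1 - ‖z‖ ^ 2) ^ 2)) *
        Real.exp ((1 / ‖μ‖ ^ 2) * (1 - 1 / ‖z‖ ^ 2)) *
        (1 + (1 - ‖z‖ ^ 2) / (‖μ‖ ^ 2 * ‖z‖ ^ 4)))) := by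
  set r : ℝ := ‖z‖ ^ 2 with hrdef
  set m : ℝ := ‖μ‖ ^ 2 with hmdef
  have hμ0 : 0 < ‖μ‖ := by simpa using hμ
  have hm0 : 0 < m := by positivity
  have hr0 : 0 < r := by positivity
  have hr1 : r < 1 := by nlinarith
  have hr1' : (0:ℝ) < 1 - r := by linarith
  -- prefactor limit
  have hA := aux_pow_exp (-(1/(m*r))) 2
  have hB := aux_pow_exp (-(1/m)) 1
  have hP : Tendsto (fun N : ℕ =>
      (1 + (-(1/(m*r)))/N)^(N-2) / ((1 + (-(1/m))/N)^(N-1) * r^2)) atTop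
      (nhds (Real.exp (-(1/(m*r))) / (Real.exp (-(1/m)) * r^2))) :=
    hA.div (hB.mul tendsto_const_nhds) (by positivity)
  -- geometric pieces
  have hgeo : HasSum (fun n : ℕ => r ^ n) (1 - r)⁻¹ := hasSum_geometric_of_lt_one hr0.le hr1
  have hjr : HasSum (fun n : ℕ => (n:ℝ) * r ^ n) (r / (1 - r)^2) :=
    hasSum_coe_mul_geometric_of_norm_lt_one (by rwa [Real.norm_eq_abs, abs_of_pos hr0])
  have hsub := tendsto_sub_atTop_nat 1
  have hS1 : Tendsto (fun N : ℕ => ∑ j ∈ range (N-1), r ^ j) atTop (nhds (1-r)⁻¹) :=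
    hgeo.tendsto_sum_nat.comp hsub
  have hS2 : Tendsto (fun N : ℕ => ∑ j ∈ range (N-1), (j:ℝ) * r ^ j) atTop
      (nhds (r/(1-r)^2)) := hjr.tendsto_sum_nat.comp hsub
  have hpow0 : Tendsto (fun N : ℕ => r ^ N) atTop (nhds 0) :=
    tendsto_pow_atTop_nhds_zero_of_lt_one hr0.le hr1
  have hnpow0 : Tendsto (fun N : ℕ => (N:ℝ) * r ^ N) atTop (nhds 0) :=
    hjr.summable.tendsto_atTop_zero
  have hNr : Tendsto (fun N : ℕ => ((N:ℝ)-1) * r ^ N) atTop (nhds 0) := by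
    have := hnpow0.sub hpow0
    rw [sub_zero] at this
    exact this.congr (fun N => by ring)
  have hinvN : Tendsto (fun N : ℕ => 1/(N:ℝ)) atTop (nhds 0) :=
    tendsto_one_div_atTop_nhds_zero_nat
  have hfrac : ∀ c : ℝ, Tendsto (fun N : ℕ => ((N:ℝ)-c)/N) atTop (nhds 1) := by
    intro c
    have h : Tendsto (fun N : ℕ => (1:ℝ) - c / N) atTop (nhds (1 - 0)) :=
      tendsto_const_nhds.sub (tendsto_const_div_atTop_nhds_zero_nat c)
    rw [sub_zero] at h
    refine h.congr' ?_
    filter_upwards [eventually_gt_atTop 0] with N hN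
    have : (N:ℝ) ≠ 0 := Nat.cast_ne_zero.mpr hN.ne'
    field_simp
  -- bracket limit
  have hBr : Tendsto (fun N : ℕ =>
      ((N:ℝ)-1)*r^N + (1/m)*(((N:ℝ)-1)/N)
      + r * (∑ j ∈ range (N-1), (j:ℝ) * r ^ j)
      + ((1/m)*(((N:ℝ)-2)/N)) * (r * ∑ j ∈ range (N-1), r ^ j)
      - ((1/m)*(1/N)) * (r * ∑ j ∈ range (N-1), (j:ℝ) * r ^ j)) atTop
      (nhds (0 + (1/m)*1 + r*(r/(1-r)^2) + ((1/m)*1)*(r*(1-r)⁻¹)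
        - ((1/m)*0)*(r*(r/(1-r)^2)))) := by
    exact (((hNr.add ((tendsto_const_nhds).mul (hfrac 1))).add
      ((tendsto_const_nhds).mul hS2)).add
      (((tendsto_const_nhds).mul (hfrac 2)).mul ((tendsto_const_nhds).mul hS1))).sub
      (((tendsto_const_nhds).mul hinvN).mul ((tendsto_const_nhds).mul hS2))
  -- full simplified sequence
  have hG := ((tendsto_const_nhds (α := ℕ) (x := 1 / Real.pi) (f := atTop)).mul hP).mul hBr
  have habs4 : ‖z‖ ^ 4 = r ^ 2 := by rw [hrdef]; ring
  have hNe : (1:ℝ)/Real.pi * (Real.exp (-(1/(m*r))) / (Real.exp (-(1/m)) * r^2)) *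
      (0 + (1/m)*1 + r*(r/(1-r)^2) + ((1/m)*1)*(r*(1-r)⁻¹)
        - ((1/m)*0)*(r*(r/(1-r)^2)))
      = (1 / (Real.pi * (1 - r) ^ 2)) * Real.exp ((1/m) * (1 - 1/r)) *
        (1 + (1 - r) / (m * ‖z‖ ^ 4)) := by
    have hexpkey : Real.exp (-(1/(m*r))) = Real.exp ((1/m) * (1-1/r)) * Real.exp (-(1/m)) := by
      rw [← Real.exp_add]; congr 1; field_simp; ring
    rw [habs4, hexpkey]
    field_simp
    ring
  rw [hNe] at hG
  refine hG.congr' ?_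
  filter_upwards [eventually_ge_atTop 2] with N hN2
  have hNne : ((N:ℝ)) ≠ 0 := by exact_mod_cast (by omega : N ≠ 0)
  have h2N : ‖z‖ ^ (2 * N) = r ^ N := pow_mul (‖z‖) 2 N
  have hsum : (∑ k ∈ range (N-1), (((N:ℝ) - 2 - k) + k * (1/(m*N))) *
        ‖z‖ ^ (2*(N-1-k)))
      = r * (∑ j ∈ range (N-1), (j:ℝ) * r ^ j)
        + ((1/m)*(((N:ℝ)-2)/N)) * (r * ∑ j ∈ range (N-1), r ^ j)
        - ((1/m)*(1/N)) * (r * ∑ j ∈ range (N-1), (j:ℝ) * r ^ j) := by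
    rw [← Finset.sum_range_reflect]
    simp only [Finset.mul_sum]
    rw [← Finset.sum_add_distrib, ← Finset.sum_sub_distrib]
    apply Finset.sum_congr rfl
    intro j hj
    rw [Finset.mem_range] at hj
    have he : 2 * (N - 1 - (N - 1 - 1 - j)) = 2 * (j + 1) := by omega
    have hc : ((N - 1 - 1 - j : ℕ) : ℝ) = (N:ℝ) - 2 - j := by
      have h1 : (N - 1 - 1 - j : ℕ) = N - (2 + j) := by omega
      rw [h1, Nat.cast_sub (by omega)]
      push_cast; ring
    rw [he, hc, pow_mul, pow_succ]
    field_simp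
    ring
  rw [hsum, h2N]
  have hY : (1:ℝ) - 1/(m*N) = 1 + (-(1/m))/N := by field_simp; ring
  have hX : r - 1/(m*N) = r * (1 + (-(1/(m*r)))/N) := by field_simp; ring
  have hrpne : r ^ (N-2) ≠ 0 := pow_ne_zero _ hr0.ne'
  have hpre : (r - 1/(m*N))^(N-2) / ((1 - 1/(m*N))^(N-1) * r ^ N)
      = (1 + (-(1/(m*r)))/N)^(N-2) / ((1 + (-(1/m))/N)^(N-1) * r^2) := by
    rw [hX, hY, mul_pow, show r ^ N = r^(N-2) * r^2 from by rw [← pow_add]; congr 1; omega]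
    rw [show ((1:ℝ) + (-(1/m))/N)^(N-1) * (r^(N-2) * r^2)
        = r^(N-2) * (((1:ℝ) + (-(1/m))/N)^(N-1) * r^2) from by ring]
    exact mul_div_mul_left _ _ hrpne
  rw [hpre]
  have hbr : ((N:ℝ)-1)*r^N + (1/m)*(((N:ℝ)-1)/N) = ((N:ℝ)-1) * (r^N + 1/(m*N)) := by
    field_simp
  rw [← hbr]
  ring
end

section
/- Fix an integer k ≥ 1, points z₁,…,z_k ∈ ℂ with 0 < |z_l| < 1 for all l, and t > 0. Set x₀ = Π_{l=1}^k |z_l|². For each integer N ≥ 2 set t_N = t/N, let g_N(x) = Σ_{m=0}^{N−1} x^m and h_N(x) = Σ_{m=0}^{N−1} m x^m, let q_j^{(N)} be the coefficient of s^j in the polynomial (in s) det[ s·g_N(z_i \bar{z}_j) + h_N(z_i \bar{z}_j) ]_{i,j=1}^k, and define functions on (t_N,∞) by F_{N,0}(x) = x^{−1}(1 − t_N/x)^{N−1} and F_{N,l+1}(x) = d/dx [ x·F_{N,l}(x) ]. Let Q_j be the coefficient of s^j in det[ s/(1 − z_i \bar{z}_j) + z_i \bar{z}_j/(1 − z_i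 \bar{z}_j)² ]_{i,j=1}^k, and define on (0,∞): F_0^{(t)}(x) = x^{−1} e^{−t/x} and F_{l+1}^{(t)}(x) = d/dx [ x·F_l^{(t)}(x) ]. Then lim_{N→∞} π^{−k} (1 − t_N)^{1−N} Σ_{l=0}^k q_l^{(N)} · F_{N,l}(x₀) = π^{−k} e^{t} Σ_{l=0}^k Q_l · F_l^{(t)}(x₀). -/
open Matrix Polynomial ComplexConjugate Filter

/-- The operator `f ↦ d/dx (x·f(x))`, iterated. -/
noncomputable def iterD (f : ℝ → ℝ) : ℕ → ℝ → ℝ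
  | 0 => f
  | (l + 1) => deriv (fun x => x * iterD f l x)

/-- The coefficient of `s^j` in the polynomial (in `s`)
`det [ s·g(z_i z̄_{i'}) + h(z_i z̄_{i'}) ]_{i,i'=1}^k`. -/
noncomputable def coefDet {k : ℕ} (g h : ℂ → ℂ) (z : Fin k → ℂ) (j : ℕ) : ℂ :=
  (Matrix.det (Matrix.of fun i i' : Fin k =>
    Polynomial.C (g (z i * conj (z i'))) * Polynomial.X
      + Polynomial.C (h (z i * conj (z i'))))).coeff j

noncomputable def Ppoly (t : ℝ) : ℕ → Polynomial ℝ
  | 0 => X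
  | (l+1) => Ppoly t l - X * (Ppoly t l).derivative + C t * X * Ppoly t l

noncomputable def Qpoly (t : ℝ) (N : ℕ) : ℕ → Polynomial ℝ
  | 0 => X
  | (l+1) => (Qpoly t N l - X * (Qpoly t N l).derivative) * (1 - C (t/(N:ℝ)) * X)
      + C (((N:ℝ) - 1 - l) * (t/(N:ℝ))) * X * Qpoly t N l

lemma lemA (t : ℝ) (l : ℕ) : ∀ x : ℝ, 0 < x →
    iterD (fun x => x⁻¹ * Real.exp (-t / x)) l x
      = (Ppoly t l).eval x⁻¹ * Real.exp (-t / x) := by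
  induction l with
  | zero => intro x hx; simp [iterD, Ppoly]
  | succ l ih =>
    intro x hx
    have hev : (fun y => y * iterD (fun x => x⁻¹ * Real.exp (-t / x)) l y)
        =ᶠ[nhds x] (fun y => y * ((Ppoly t l).eval y⁻¹ * Real.exp (-t / y))) := by
      filter_upwards [isOpen_Ioi.mem_nhds (Set.mem_Ioi.2 hx)] with y hy
      rw [ih y hy]
    rw [iterD, hev.deriv_eq]
    have hx0 : x ≠ 0 := ne_of_gt hx
    have hinv : HasDerivAt (fun y : ℝ => y⁻¹) (-(x^2)⁻¹) x := hasDerivAt_inv hx0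
    have hP : HasDerivAt (fun y : ℝ => (Ppoly t l).eval y⁻¹)
        ((Ppoly t l).derivative.eval x⁻¹ * (-(x^2)⁻¹)) x :=
      (Polynomial.hasDerivAt _ _).comp x hinv
    have hexp : HasDerivAt (fun y : ℝ => Real.exp (-t / y))
        (Real.exp (-t / x) * ((-t) * (-(x^2)⁻¹))) x := by
      have : HasDerivAt (fun y : ℝ => (-t) * y⁻¹) ((-t) * (-(x^2)⁻¹)) x := hinv.const_mul (-t)
      have h2 := (Real.hasDerivAt_exp ((-t) * x⁻¹)).comp x this
      simpa [div_eq_mul_inv, Function.comp_def] using h2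
    have hmain : HasDerivAt (fun y : ℝ => y * ((Ppoly t l).eval y⁻¹ * Real.exp (-t / y)))
        (1 * ((Ppoly t l).eval x⁻¹ * Real.exp (-t / x))
          + x * ((Ppoly t l).derivative.eval x⁻¹ * (-(x^2)⁻¹) * Real.exp (-t / x)
            + (Ppoly t l).eval x⁻¹ * (Real.exp (-t / x) * ((-t) * (-(x^2)⁻¹))))) x :=
      (hasDerivAt_id x).mul (hP.mul hexp)
    rw [hmain.deriv]
    show _ = (Ppoly t (l+1)).eval x⁻¹ * Real.exp (-t / x)
    simp only [Ppoly, eval_add, eval_sub, eval_mul, eval_X, eval_C]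
    field_simp
    ring

lemma lemB (t : ℝ) (N : ℕ) : ∀ l : ℕ, l + 2 ≤ N → ∀ x : ℝ, 0 < x →
    iterD (fun x => x⁻¹ * (1 - (t / (N : ℝ)) / x) ^ (N - 1)) l x
      = (Qpoly t N l).eval x⁻¹ * (1 - (t / (N : ℝ)) / x) ^ (N - 1 - l) := by
  intro l
  induction l with
  | zero => intro _ x hx; simp [iterD, Qpoly]
  | succ l ih =>
    intro hN x hx
    have hN' : l + 2 ≤ N := by omega
    set c : ℝ := t / (N : ℝ) with hc
    have hev : (fun y => y * iterD (fun x => x⁻¹ * (1 - c / x) ^ (N - 1)) l y)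
        =ᶠ[nhds x] (fun y => y * ((Qpoly t N l).eval y⁻¹ * (1 - c / y) ^ (N - 1 - l))) := by
      filter_upwards [isOpen_Ioi.mem_nhds (Set.mem_Ioi.2 hx)] with y hy
      rw [ih hN' y hy]
    rw [iterD, hev.deriv_eq]
    have hx0 : x ≠ 0 := ne_of_gt hx
    set m : ℕ := N - 1 - l with hm
    have hm1 : 1 ≤ m := by omega
    have hinv : HasDerivAt (fun y : ℝ => y⁻¹) (-(x^2)⁻¹) x := hasDerivAt_inv hx0
    have hP : HasDerivAt (fun y : ℝ => (Qpoly t N l).eval y⁻¹)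
        ((Qpoly t N l).derivative.eval x⁻¹ * (-(x^2)⁻¹)) x :=
      (Polynomial.hasDerivAt _ _).comp x hinv
    have hv : HasDerivAt (fun y : ℝ => (1 - c / y) ^ m)
        ((m : ℝ) * (1 - c / x) ^ (m - 1) * ((-c) * (-(x^2)⁻¹))) x := by
      have h1 : HasDerivAt (fun y : ℝ => 1 - c / y) ((-c) * (-(x^2)⁻¹)) x := by
        have : HasDerivAt (fun y : ℝ => 1 + (-c) * y⁻¹) ((-c) * (-(x^2)⁻¹)) x :=
          (hinv.const_mul (-c)).const_add 1
        simpa [div_eq_mul_inv, sub_eq_add_neg, neg_mul] using this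
      exact h1.pow m
    have hmain : HasDerivAt (fun y : ℝ => y * ((Qpoly t N l).eval y⁻¹ * (1 - c / y) ^ m))
        (1 * ((Qpoly t N l).eval x⁻¹ * (1 - c / x) ^ m)
          + x * ((Qpoly t N l).derivative.eval x⁻¹ * (-(x^2)⁻¹) * (1 - c / x) ^ m
            + (Qpoly t N l).eval x⁻¹
              * ((m : ℝ) * (1 - c / x) ^ (m - 1) * ((-c) * (-(x^2)⁻¹))))) x :=
      (hasDerivAt_id x).mul (hP.mul hv)
    rw [hmain.deriv]
    have hpow : (1 - c / x) ^ m = (1 - c / x) ^ (m - 1) * (1 - c / x) := by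
      conv_lhs => rw [show m = (m - 1) + 1 by omega]
      rw [pow_succ]
    have hmr : (m : ℝ) = (N : ℝ) - 1 - l := by
      have : m = N - (1 + l) := by omega
      rw [this]
      push_cast [Nat.cast_sub (by omega : 1 + l ≤ N)]
      ring
    have hml : m - 1 = N - 1 - (l + 1) := by omega
    show _ = (Qpoly t N (l+1)).eval x⁻¹ * (1 - c / x) ^ (N - 1 - (l+1))
    simp only [Qpoly, eval_add, eval_sub, eval_mul, eval_X, eval_C, eval_one, ← hc]
    rw [hpow, ← hml, hmr]
    field_simp
    ring

lemma tendsto_div_nat (a : ℝ) : Tendsto (fun N : ℕ => a / (N : ℝ)) atTop (nhds 0) :=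
  tendsto_const_nhds.div_atTop tendsto_natCast_atTop_atTop

lemma tendsto_aN (t : ℝ) (l : ℕ) :
    Tendsto (fun N : ℕ => ((N : ℝ) - 1 - l) * (t / (N : ℝ))) atTop (nhds t) := by
  have h : Tendsto (fun N : ℕ => t - (1 + (l:ℝ)) * (t / (N : ℝ))) atTop (nhds t) := by
    have := (tendsto_div_nat t).const_mul (1 + (l:ℝ))
    simpa using tendsto_const_nhds.sub this
  refine h.congr' ?_
  filter_upwards [eventually_ge_atTop 1] with N hN
  have hN0 : (N : ℝ) ≠ 0 := by positivity
  field_simp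
  ring

lemma tendsto_Xmul {f : ℕ → Polynomial ℝ} {g : Polynomial ℝ}
    (h : ∀ j, Tendsto (fun N => (f N).coeff j) atTop (nhds (g.coeff j))) :
    ∀ j, Tendsto (fun N => (X * f N).coeff j) atTop (nhds ((X * g).coeff j)) := by
  intro j
  rcases j with _ | m
  · simp [coeff_zero, Polynomial.mul_coeff_zero]
  · simpa [coeff_X_mul] using h m

lemma lemC (t : ℝ) (l : ℕ) : ∀ j : ℕ,
    Tendsto (fun N : ℕ => (Qpoly t N l).coeff j) atTop (nhds ((Ppoly t l).coeff j)) := by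
  induction l with
  | zero => intro j; simp [Qpoly, Ppoly]
  | succ l ih =>
    have ihD : ∀ j, Tendsto (fun N => (Qpoly t N l).derivative.coeff j) atTop
        (nhds ((Ppoly t l).derivative.coeff j)) := by
      intro j
      simpa [coeff_derivative] using (ih (j+1)).mul_const ((j:ℝ)+1)
    have ihA : ∀ j, Tendsto (fun N => (Qpoly t N l - X * (Qpoly t N l).derivative).coeff j)
        atTop (nhds ((Ppoly t l - X * (Ppoly t l).derivative).coeff j)) := by
      intro j
      simpa [coeff_sub] using (ih j).sub (tendsto_Xmul ihD j)
    intro j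
    have e1 : ∀ (c a : ℝ) (p : Polynomial ℝ),
        (p - X * p.derivative) * (1 - C c * X) + C a * X * p
          = (p - X * p.derivative) - C c * (X * (p - X * p.derivative)) + C a * (X * p) := by
      intro c a p; ring
    have hQ : ∀ N : ℕ, (Qpoly t N (l+1)).coeff j
        = (Qpoly t N l - X * (Qpoly t N l).derivative).coeff j
          - (t/(N:ℝ)) * (X * (Qpoly t N l - X * (Qpoly t N l).derivative)).coeff j
          + (((N:ℝ) - 1 - l) * (t/(N:ℝ))) * (X * Qpoly t N l).coeff j := by
      intro N
      show ((Qpoly t N l - X * (Qpoly t N l).derivative) * (1 - C (t/(N:ℝ)) * X)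
        + C (((N:ℝ) - 1 - l) * (t/(N:ℝ))) * X * Qpoly t N l).coeff j = _
      rw [e1, coeff_add, coeff_sub, coeff_C_mul, coeff_C_mul]
    have hP : (Ppoly t (l+1)).coeff j
        = (Ppoly t l - X * (Ppoly t l).derivative).coeff j
          - 0 * (X * (Ppoly t l - X * (Ppoly t l).derivative)).coeff j
          + t * (X * Ppoly t l).coeff j := by
      show (Ppoly t l - X * (Ppoly t l).derivative + C t * X * Ppoly t l).coeff j = _
      have : Ppoly t l - X * (Ppoly t l).derivative + C t * X * Ppoly t l
          = (Ppoly t l - X * (Ppoly t l).derivative) + C t * (X * Ppoly t l) := by ring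
      rw [this, coeff_add, coeff_C_mul]
      ring
    simp only [hQ, hP]
    exact ((ihA j).sub ((tendsto_div_nat t).mul (tendsto_Xmul ihA j))).add
      ((tendsto_aN t l).mul (tendsto_Xmul ih j))

lemma step_natDegree_le {p : Polynomial ℝ} {c a : ℝ} {d : ℕ} (hp : p.natDegree ≤ d) :
    ((p - X * p.derivative) * (1 - C c * X) + C a * X * p).natDegree ≤ d + 1 := by
  have hXd : (X * p.derivative).natDegree ≤ d := by
    rcases Nat.eq_zero_or_pos d with rfl | hd
    · have hp0 : p = C (p.coeff 0) := eq_C_of_natDegree_le_zero hp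
      rw [hp0]
      simp
    · refine (natDegree_mul_le).trans ?_
      have h1 : (X : Polynomial ℝ).natDegree = 1 := natDegree_X
      have h2 : p.derivative.natDegree ≤ d - 1 := (natDegree_derivative_le p).trans (by omega)
      omega
  have hA : (p - X * p.derivative).natDegree ≤ d := (natDegree_sub_le _ _).trans (by omega)
  have hB : ((1 : Polynomial ℝ) - C c * X).natDegree ≤ 1 := by
    refine (natDegree_sub_le _ _).trans ?_
    simp [natDegree_one]
    exact (natDegree_C_mul_le _ _).trans (by simp)
  refine (natDegree_add_le _ _).trans (max_le ?_ ?_)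
  · exact (natDegree_mul_le).trans (by omega)
  · refine (natDegree_mul_le).trans ?_
    have : ((C a : Polynomial ℝ) * X).natDegree ≤ 1 := (natDegree_C_mul_le _ _).trans (by simp)
    omega

lemma Qpoly_natDegree_le (t : ℝ) (N l : ℕ) : (Qpoly t N l).natDegree ≤ l + 1 := by
  induction l with
  | zero => simp [Qpoly]
  | succ l ih => exact step_natDegree_le ih

lemma Ppoly_natDegree_le (t : ℝ) (l : ℕ) : (Ppoly t l).natDegree ≤ l + 1 := by
  induction l with
  | zero => simp [Ppoly]
  | succ l ih =>
    have h := step_natDegree_le (p := Ppoly t l) (c := 0) (a := t) ih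
    simpa [Ppoly] using h

lemma lemD (t : ℝ) (l : ℕ) (y : ℝ) :
    Tendsto (fun N : ℕ => (Qpoly t N l).eval y) atTop (nhds ((Ppoly t l).eval y)) := by
  have hQ : ∀ N : ℕ, (Qpoly t N l).eval y
      = ∑ j ∈ Finset.range (l+2), (Qpoly t N l).coeff j * y^j := fun N =>
    eval_eq_sum_range' (lt_of_le_of_lt (Qpoly_natDegree_le t N l) (by omega)) y
  have hP : (Ppoly t l).eval y = ∑ j ∈ Finset.range (l+2), (Ppoly t l).coeff j * y^j :=
    eval_eq_sum_range' (lt_of_le_of_lt (Ppoly_natDegree_le t l) (by omega)) y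
  simp only [hQ, hP]
  exact tendsto_finset_sum _ fun j _ => (lemC t l j).mul_const _

lemma tendsto_pow_sub (a : ℝ) (j : ℕ) :
    Tendsto (fun N : ℕ => (1 - a / (N:ℝ)) ^ (N - j)) atTop (nhds (Real.exp (-a))) := by
  have hb : Tendsto (fun N : ℕ => 1 - a / (N:ℝ)) atTop (nhds 1) := by
    simpa using tendsto_const_nhds.sub (tendsto_div_nat a)
  have h1 : Tendsto (fun N : ℕ => (1 - a / (N:ℝ)) ^ N) atTop (nhds (Real.exp (-a))) := by
    refine (Real.tendsto_one_add_div_pow_exp (-a)).congr fun N => ?_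
    rw [neg_div, ← sub_eq_add_neg]
  have h2 : Tendsto (fun N : ℕ => (1 - a / (N:ℝ)) ^ N / (1 - a / (N:ℝ)) ^ j) atTop
      (nhds (Real.exp (-a))) := by
    have := h1.div (hb.pow j) (by norm_num)
    simpa [Pi.div_def] using this
  refine h2.congr' ?_
  filter_upwards [eventually_ge_atTop j, hb.eventually_ne one_ne_zero] with N h3 h4
  rw [eq_comm, pow_sub₀ _ h4 h3, ← div_eq_mul_inv]

lemma tendsto_coeff_prod {ι : Type*} [DecidableEq ι] (s : Finset ι) (a b : ℕ → ι → ℂ)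
    (A B : ι → ℂ) (ha : ∀ i, Tendsto (fun N => a N i) atTop (nhds (A i)))
    (hb : ∀ i, Tendsto (fun N => b N i) atTop (nhds (B i))) :
    ∀ j, Tendsto (fun N => (∏ i ∈ s, (C (a N i) * X + C (b N i))).coeff j) atTop
      (nhds ((∏ i ∈ s, (C (A i) * X + C (B i))).coeff j)) := by
  induction s using Finset.induction_on with
  | empty =>
    intro j
    simp only [Finset.prod_empty, coeff_one]
    exact tendsto_const_nhds
  | insert i s hi ih =>
    intro j
    simp only [Finset.prod_insert hi, coeff_mul]
    refine tendsto_finset_sum _ fun p _ => ?_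
    refine Tendsto.mul ?_ (ih p.2)
    simp only [coeff_add, coeff_C_mul, coeff_X, coeff_C]
    refine Tendsto.add (Tendsto.mul (ha i) tendsto_const_nhds) ?_
    split_ifs
    · exact hb i
    · exact tendsto_const_nhds

lemma tendsto_coefDet {k : ℕ} (z : Fin k → ℂ) (gN hN : ℕ → ℂ → ℂ) (g h : ℂ → ℂ)
    (hg : ∀ w : ℂ, (∃ i i' : Fin k, w = z i * conj (z i')) →
      Tendsto (fun N => gN N w) atTop (nhds (g w)))
    (hh : ∀ w : ℂ, (∃ i i' : Fin k, w = z i * conj (z i')) →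
      Tendsto (fun N => hN N w) atTop (nhds (h w))) (j : ℕ) :
    Tendsto (fun N => coefDet (gN N) (hN N) z j) atTop (nhds (coefDet g h z j)) := by
  unfold coefDet
  simp only [Matrix.det_apply, Matrix.of_apply, Polynomial.finset_sum_coeff,
    Polynomial.coeff_smul]
  refine tendsto_finset_sum _ fun σ _ => ?_
  refine Tendsto.const_smul ?_ _
  exact tendsto_coeff_prod Finset.univ
    (fun N i => gN N (z (σ i) * conj (z i))) (fun N i => hN N (z (σ i) * conj (z i)))
    (fun i => g (z (σ i) * conj (z i))) (fun i => h (z (σ i) * conj (z i)))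
    (fun i => hg _ ⟨σ i, i, rfl⟩) (fun i => hh _ ⟨σ i, i, rfl⟩) j
/-- `N → ∞` limit of the finite-`N` `k`-point correlation
`π^{−k} (1 − t_N)^{1−N} Σ_{l=0}^k q_l^{(N)} F_{N,l}(x₀)` (with `t_N = t/N`)
to `π^{−k} e^t Σ_{l=0}^k Q_l F_l^{(t)}(x₀)`. -/
theorem stmt6 (k : ℕ) (hk : 1 ≤ k) (z : Fin k → ℂ)
    (hz : ∀ l, 0 < ‖z l‖ ∧ ‖z l‖ < 1)
    (t : ℝ) (ht : 0 < t) :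
    Tendsto (fun N : ℕ =>
      (1 / (Real.pi : ℂ)) ^ k * (((1 - t / (N : ℝ)) ^ ((1 : ℤ) - (N : ℤ)) : ℝ) : ℂ) *
        ∑ l ∈ Finset.range (k + 1),
          coefDet (fun x => ∑ m ∈ Finset.range N, x ^ m)
              (fun x => ∑ m ∈ Finset.range N, (m : ℂ) * x ^ m) z l *
            ((iterD (fun x => x⁻¹ * (1 - (t / (N : ℝ)) / x) ^ (N - 1)) l
                (∏ l', ‖z l'‖ ^ 2) : ℝ) : ℂ))
      atTop
      (nhds ((1 / (Real.pi : ℂ)) ^ k * (Real.exp t : ℂ) *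
        ∑ l ∈ Finset.range (k + 1),
          coefDet (fun x => (1 - x)⁻¹) (fun x => x / (1 - x) ^ 2) z l *
            ((iterD (fun x => x⁻¹ * Real.exp (-t / x)) l
                (∏ l', ‖z l'‖ ^ 2) : ℝ) : ℂ))) := by
  set x₀ : ℝ := ∏ l', ‖z l'‖ ^ 2 with hx₀def
  have hx₀ : 0 < x₀ := Finset.prod_pos fun i _ => pow_pos (hz i).1 2
  -- Part 1 : the prefactor
  have hreal : Tendsto (fun N : ℕ => ((1 - t/(N:ℝ)) ^ ((1:ℤ) - (N:ℤ)) : ℝ)) atTop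
      (nhds (Real.exp t)) := by
    have h1 := (tendsto_pow_sub t 1).inv₀ (Real.exp_ne_zero (-t))
    rw [← Real.exp_neg, neg_neg] at h1
    refine h1.congr' ?_
    filter_upwards [eventually_ge_atTop 1] with N hN
    have he : (1:ℤ) - (N:ℤ) = -(((N - 1 : ℕ) : ℤ)) := by
      rw [Nat.cast_sub hN]; ring
    rw [he, _root_.zpow_neg, zpow_natCast]
  have part1 : Tendsto (fun N : ℕ => (((1 - t/(N:ℝ)) ^ ((1:ℤ) - (N:ℤ)) : ℝ) : ℂ)) atTop
      (nhds ((Real.exp t : ℝ) : ℂ)) :=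
    (Complex.continuous_ofReal.tendsto _).comp hreal
  -- Part 2 : the sum
  have hsum : Tendsto (fun N : ℕ =>
      ∑ l ∈ Finset.range (k + 1),
        coefDet (fun x => ∑ m ∈ Finset.range N, x ^ m)
            (fun x => ∑ m ∈ Finset.range N, (m : ℂ) * x ^ m) z l *
          ((iterD (fun x => x⁻¹ * (1 - (t / (N : ℝ)) / x) ^ (N - 1)) l x₀ : ℝ) : ℂ))
      atTop
      (nhds (∑ l ∈ Finset.range (k + 1),
        coefDet (fun x => (1 - x)⁻¹) (fun x => x / (1 - x) ^ 2) z l *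
          ((iterD (fun x => x⁻¹ * Real.exp (-t / x)) l x₀ : ℝ) : ℂ))) := by
    refine tendsto_finset_sum _ fun l _ => ?_
    have hnorm : ∀ w : ℂ, (∃ i i' : Fin k, w = z i * conj (z i')) → ‖w‖ < 1 := by
      rintro w ⟨i, i', rfl⟩
      rw [norm_mul, Complex.norm_conj]
      nlinarith [(hz i).1, (hz i).2, (hz i').1, (hz i').2, norm_nonneg (z i'),
        norm_nonneg (z i)]
    have hcd : Tendsto (fun N : ℕ =>
        coefDet (fun x => ∑ m ∈ Finset.range N, x ^ m)
          (fun x => ∑ m ∈ Finset.range N, (m : ℂ) * x ^ m) z l) atTop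
        (nhds (coefDet (fun x => (1 - x)⁻¹) (fun x => x / (1 - x) ^ 2) z l)) := by
      refine tendsto_coefDet z _ _ _ _ ?_ ?_ l
      · exact fun w hw => (hasSum_geometric_of_norm_lt_one (hnorm w hw)).tendsto_sum_nat
      · exact fun w hw => (hasSum_coe_mul_geometric_of_norm_lt_one (hnorm w hw)).tendsto_sum_nat
    have hFl : Tendsto (fun N : ℕ =>
        iterD (fun x => x⁻¹ * (1 - (t/(N:ℝ))/x) ^ (N-1)) l x₀) atTop
        (nhds (iterD (fun x => x⁻¹ * Real.exp (-t / x)) l x₀)) := by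
      rw [lemA t l x₀ hx₀]
      have hpow : Tendsto (fun N : ℕ => (1 - (t/(N:ℝ))/x₀) ^ (N - 1 - l)) atTop
          (nhds (Real.exp (-t / x₀))) := by
        have h := tendsto_pow_sub (t/x₀) (1 + l)
        have heq : ∀ N : ℕ, (1 - (t/x₀)/(N:ℝ)) ^ (N - (1+l))
            = (1 - (t/(N:ℝ))/x₀) ^ (N - 1 - l) := by
          intro N
          rw [Nat.sub_sub]
          congr 2
          rw [div_div, div_div, mul_comm]
        have := h.congr heq
        simpa [neg_div] using this
      have hmul := (lemD t l x₀⁻¹).mul hpow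
      refine hmul.congr' ?_
      filter_upwards [eventually_ge_atTop (l+2)] with N hN
      exact (lemB t N l hN x₀ hx₀).symm
    exact hcd.mul ((Complex.continuous_ofReal.tendsto _).comp hFl)
  exact (tendsto_const_nhds.mul part1).mul hsum
end

section
/- Let z, w ∈ ℂ with 0 < |z| < 1, 0 < |w| < 1, and let t > 0. Set x₀ = |z|²|w|². Let Q_j (j = 0,1,2) be the coefficient of s^j in the 2×2 determinant det[ s/(1 − z_i \bar{z}_j) + z_i \bar{z}_j/(1 − z_i \bar{z}_j)² ]_{i,j=1}^2 with z₁ = z, z₂ = w, and define F_0^{(t)}(x) = x^{−1} e^{−t/x}, F_{l+1}^{(t)}(x) = d/dx [ x·F_l^{(t)}(x) ]. Define Y₀ = |zw|² ( 1/((1−|z|²)²(1−|w|²)²) − 1/((1 − z\bar{w})²(1 − \bar{z}w)²) ), Y₁ = |w|²/((1−|z|²)(1−|w|²)²) + |z|²/((1−|z|²)²(1−|w|²)) − (1/|1 − z\bar{w}|²)( w\bar{z}/(1 − w\bar{z}) + z\bar{w}/(1 − z\bar{w}) ), and Y₂ = |z−w|²/((1−|z|²)(1−|w|²)|1 − z\bar{w}|²).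 Then π^{−2} e^{t} Σ_{l=0}^2 Q_l · F_l^{(t)}(x₀) = π^{−2} e^{t(1 − 1/x₀)} ( Y₀/x₀ + t(Y₁ − Y₂)/x₀² + t² Y₂/x₀³ ). -/
open Matrix Polynomial ComplexConjugate

private lemma linmul (a b c d : ℂ) :
    (C a * X + C b) * (C c * X + C d)
      = C (a*c) * X^2 + C (a*d + b*c) * X + C (b*d) := by
  simp only [C_mul, C_add]; ring

private lemma coefDet_eval (g h : ℂ → ℂ) (z w : ℂ) (j : ℕ) :
    coefDet g h ![z, w] j =
      (C (g (z * conj z) * g (w * conj w)) * X^2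
        + C (g (z * conj z) * h (w * conj w) + h (z * conj z) * g (w * conj w)) * X
        + C (h (z * conj z) * h (w * conj w))
       - (C (g (z * conj w) * g (w * conj z)) * X^2
        + C (g (z * conj w) * h (w * conj z) + h (z * conj w) * g (w * conj z)) * X
        + C (h (z * conj w) * h (w * conj z)))).coeff j := by
  rw [coefDet, Matrix.det_fin_two]
  simp only [Matrix.of_apply, Matrix.cons_val', Matrix.cons_val_zero, Matrix.cons_val_one,
    Matrix.head_cons, Matrix.empty_val', Matrix.cons_val_fin_one, Matrix.head_fin_const]
  rw [linmul, linmul]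

private lemma coefDet0 (g h : ℂ → ℂ) (z w : ℂ) :
    coefDet g h ![z, w] 0 =
      h (z * conj z) * h (w * conj w) - h (z * conj w) * h (w * conj z) := by
  rw [coefDet_eval]; simp [coeff_X_pow, mul_assoc, coeff_C_mul]

private lemma coefDet1 (g h : ℂ → ℂ) (z w : ℂ) :
    coefDet g h ![z, w] 1 =
      g (z * conj z) * h (w * conj w) + h (z * conj z) * g (w * conj w)
        - (g (z * conj w) * h (w * conj z) + h (z * conj w) * g (w * conj z)) := by
  rw [coefDet_eval]; simp [coeff_X_pow, mul_assoc, coeff_C_mul]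

private lemma coefDet2 (g h : ℂ → ℂ) (z w : ℂ) :
    coefDet g h ![z, w] 2 =
      g (z * conj z) * g (w * conj w) - g (z * conj w) * g (w * conj z) := by
  rw [coefDet_eval]; simp [coeff_X_pow, mul_assoc, coeff_C_mul]

private lemma hasDerivAt_exp_neg_div (t x : ℝ) (hx : x ≠ 0) :
    HasDerivAt (fun y : ℝ => Real.exp (-t / y)) (Real.exp (-t / x) * (t / x ^ 2)) x := by
  have h1 : HasDerivAt (fun y : ℝ => -t / y) (t / x ^ 2) x := by
    have h := (hasDerivAt_inv hx).const_mul (-t)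
    have he : (fun y : ℝ => -t / y) = fun y : ℝ => -t * y⁻¹ := by
      funext y; rw [div_eq_mul_inv]
    rw [he]
    exact h.congr_deriv (by ring)
  exact h1.exp

private lemma iterD1 (t x : ℝ) (hx : x ≠ 0) :
    iterD (fun y : ℝ => y⁻¹ * Real.exp (-t / y)) 1 x = Real.exp (-t / x) * (t / x ^ 2) := by
  show deriv (fun y : ℝ => y * (y⁻¹ * Real.exp (-t / y))) x = _
  have hev : (fun y : ℝ => y * (y⁻¹ * Real.exp (-t / y))) =ᶠ[nhds x]
      fun y => Real.exp (-t / y) := by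
    filter_upwards [compl_singleton_mem_nhds hx] with y hy
    have : y ≠ 0 := hy
    field_simp
  rw [hev.deriv_eq, (hasDerivAt_exp_neg_div t x hx).deriv]

private lemma iterD2 (t x : ℝ) (hx : x ≠ 0) :
    iterD (fun y : ℝ => y⁻¹ * Real.exp (-t / y)) 2 x
      = Real.exp (-t / x) * (t ^ 2 / x ^ 3 - t / x ^ 2) := by
  show deriv (fun y : ℝ => y * iterD (fun y : ℝ => y⁻¹ * Real.exp (-t / y)) 1 y) x = _
  have hev : (fun y : ℝ => y * iterD (fun y : ℝ => y⁻¹ * Real.exp (-t / y)) 1 y) =ᶠ[nhds x]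
      fun y => Real.exp (-t / y) * (t * y⁻¹) := by
    filter_upwards [compl_singleton_mem_nhds hx] with y hy
    have hy0 : y ≠ 0 := hy
    rw [iterD1 t y hy0]
    field_simp
  rw [hev.deriv_eq]
  have hd : HasDerivAt (fun y : ℝ => Real.exp (-t / y) * (t * y⁻¹))
      (Real.exp (-t / x) * (t / x ^ 2) * (t * x⁻¹)
        + Real.exp (-t / x) * (t * -(x ^ 2)⁻¹)) x :=
    (hasDerivAt_exp_neg_div t x hx).mul ((hasDerivAt_inv hx).const_mul t)
  rw [hd.deriv]
  field_simp
  ring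

private lemma abs_sq_eq (u : ℂ) : ((‖u‖ : ℝ) : ℂ) ^ 2 = u * conj u := by
  rw [← Complex.ofReal_pow, Complex.sq_norm, Complex.mul_conj]

private lemma one_sub_ne {u : ℂ} (h : ‖u‖ < 1) : (1 : ℂ) - u ≠ 0 := by
  intro hc
  rw [sub_eq_zero] at hc
  rw [← hc] at h
  simp at h

private lemma Q1gen (a b c d : ℂ) :
    (1-a)⁻¹ * (d/(1-d)^2) + a/(1-a)^2 * (1-d)⁻¹ - ((1-b)⁻¹ * (c/(1-c)^2) + b/(1-b)^2 * (1-c)⁻¹)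
    = d/((1-a)*(1-d)^2) + a/((1-a)^2*(1-d)) - (1/((1-b)*(1-c))) * (c/(1-c) + b/(1-b)) := by
  simp only [div_eq_mul_inv, mul_inv, ← inv_pow, one_mul, one_div]; ring

private lemma Q0gen (a b c d : ℂ) (hbc : b * c = a * d) :
    a/(1-a)^2 * (d/(1-d)^2) - b/(1-b)^2 * (c/(1-c)^2)
      = a*d * (1/((1-a)^2*(1-d)^2) - 1/((1-b)^2*(1-c)^2)) := by
  have h2 : a*d * (1/((1-b)^2*(1-c)^2)) = b/(1-b)^2 * (c/(1-c)^2) := by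
    rw [← hbc]; simp only [div_eq_mul_inv, mul_inv, ← inv_pow, one_mul, one_div]; ring
  rw [mul_sub, h2]
  simp only [div_eq_mul_inv, mul_inv, ← inv_pow, one_mul, one_div]; ring

private lemma Q2gen (a b c d : ℂ) (ha : (1:ℂ)-a ≠ 0) (hb : (1:ℂ)-b ≠ 0) (hc : (1:ℂ)-c ≠ 0)
    (hd : (1:ℂ)-d ≠ 0) (hbc : b * c = a * d) :
    (1-a)⁻¹ * (1-d)⁻¹ - (1-b)⁻¹ * (1-c)⁻¹
      = (a - b - c + d) / ((1-a) * (1-d) * ((1-b)*(1-c))) := by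
  have e1 : (1-a)⁻¹ * (1-d)⁻¹ = ((1-b)*(1-c)) / ((1-a) * (1-d) * ((1-b)*(1-c))) := by
    field_simp
  have e2 : (1-b)⁻¹ * (1-c)⁻¹ = ((1-a)*(1-d)) / ((1-a) * (1-d) * ((1-b)*(1-c))) := by
    field_simp
  rw [e1, e2, div_sub_div_same]
  congr 1
  linear_combination hbc

set_option maxHeartbeats 1000000 in
/-- Explicit evaluation of the limiting two-point correlation
`π^{−2} e^t Σ_{l=0}^2 Q_l F_l^{(t)}(x₀)` in terms of `Y₀, Y₁, Y₂`. -/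
theorem stmt8 (z w : ℂ) (hz0 : 0 < ‖z‖) (hz1 : ‖z‖ < 1)
    (hw0 : 0 < ‖w‖) (hw1 : ‖w‖ < 1)
    (t : ℝ) (ht : 0 < t)
    (x₀ : ℝ) (hx₀ : x₀ = ‖z‖ ^ 2 * ‖w‖ ^ 2)
    (Y₀ Y₁ Y₂ : ℂ)
    (hY₀ : Y₀ = ((‖z * w‖ : ℂ)) ^ 2 *
      (1 / ((1 - ((‖z‖ : ℂ)) ^ 2) ^ 2 * (1 - ((‖w‖ : ℂ)) ^ 2) ^ 2)
        - 1 / ((1 - z * conj w) ^ 2 * (1 - conj z * w) ^ 2)))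
    (hY₁ : Y₁ = ((‖w‖ : ℂ)) ^ 2 /
        ((1 - ((‖z‖ : ℂ)) ^ 2) * (1 - ((‖w‖ : ℂ)) ^ 2) ^ 2)
      + ((‖z‖ : ℂ)) ^ 2 /
        ((1 - ((‖z‖ : ℂ)) ^ 2) ^ 2 * (1 - ((‖w‖ : ℂ)) ^ 2))
      - (1 / ((‖1 - z * conj w‖ : ℂ)) ^ 2) *
        ((w * conj z) / (1 - w * conj z) + (z * conj w) / (1 - z * conj w)))
    (hY₂ : Y₂ = ((‖z - w‖ : ℂ)) ^ 2 /
      ((1 - ((‖z‖ : ℂ)) ^ 2) * (1 - ((‖w‖ : ℂ)) ^ 2) *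
        ((‖1 - z * conj w‖ : ℂ)) ^ 2)) :
    (1 / (Real.pi : ℂ)) ^ 2 * (Real.exp t : ℂ) *
        ∑ l ∈ Finset.range 3,
          coefDet (fun x => (1 - x)⁻¹) (fun x => x / (1 - x) ^ 2) ![z, w] l *
            ((iterD (fun x => x⁻¹ * Real.exp (-t / x)) l x₀ : ℝ) : ℂ)
      = (1 / (Real.pi : ℂ)) ^ 2 * (Real.exp (t * (1 - 1 / x₀)) : ℂ) *
          (Y₀ / (x₀ : ℂ) + (t : ℂ) * (Y₁ - Y₂) / (x₀ : ℂ) ^ 2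
            + (t : ℂ) ^ 2 * Y₂ / (x₀ : ℂ) ^ 3) := by
  have hx0 : x₀ ≠ 0 := by rw [hx₀]; positivity
  have habsz : ‖z * conj z‖ < 1 := by
    rw [norm_mul, Complex.norm_conj]
    calc ‖z‖ * ‖z‖ < 1 * 1 :=
      mul_lt_mul'' hz1 hz1 (norm_nonneg z) (norm_nonneg z)
    _ = 1 := one_mul 1
  have habsw : ‖w * conj w‖ < 1 := by
    rw [norm_mul, Complex.norm_conj]
    calc ‖w‖ * ‖w‖ < 1 * 1 :=
      mul_lt_mul'' hw1 hw1 (norm_nonneg w) (norm_nonneg w)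
    _ = 1 := one_mul 1
  have habszw : ‖z * conj w‖ < 1 := by
    rw [norm_mul, Complex.norm_conj]
    calc ‖z‖ * ‖w‖ < 1 * 1 :=
      mul_lt_mul'' hz1 hw1 (norm_nonneg z) (norm_nonneg w)
    _ = 1 := one_mul 1
  have habswz : ‖w * conj z‖ < 1 := by
    rw [norm_mul, Complex.norm_conj]
    calc ‖w‖ * ‖z‖ < 1 * 1 :=
      mul_lt_mul'' hw1 hz1 (norm_nonneg w) (norm_nonneg z)
    _ = 1 := one_mul 1
  have hA : (1 : ℂ) - z * conj z ≠ 0 := one_sub_ne habsz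
  have hD : (1 : ℂ) - w * conj w ≠ 0 := one_sub_ne habsw
  have hB : (1 : ℂ) - z * conj w ≠ 0 := one_sub_ne habszw
  have hC : (1 : ℂ) - w * conj z ≠ 0 := one_sub_ne habswz
  have hbc : (z * conj w) * (w * conj z) = (z * conj z) * (w * conj w) := by ring
  -- the three coefficients equal Y₀, Y₁, Y₂
  have hQ0 : coefDet (fun x => (1 - x)⁻¹) (fun x => x / (1 - x) ^ 2) ![z, w] 0 = Y₀ := by
    rw [coefDet0, hY₀, abs_sq_eq, abs_sq_eq, abs_sq_eq]
    simp only [_root_.map_mul]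
    try dsimp only
    rw [Q0gen (z * conj z) (z * conj w) (w * conj z) (w * conj w) hbc]
    ring
  have hQ1 : coefDet (fun x => (1 - x)⁻¹) (fun x => x / (1 - x) ^ 2) ![z, w] 1 = Y₁ := by
    rw [coefDet1, hY₁, abs_sq_eq, abs_sq_eq, abs_sq_eq]
    simp only [_root_.map_mul, _root_.map_sub, _root_.map_one, Complex.conj_conj]
    try dsimp only
    rw [Q1gen (z * conj z) (z * conj w) (w * conj z) (w * conj w)]
    ring
  have hQ2 : coefDet (fun x => (1 - x)⁻¹) (fun x => x / (1 - x) ^ 2) ![z, w] 2 = Y₂ := by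
    rw [coefDet2, hY₂, abs_sq_eq, abs_sq_eq, abs_sq_eq, abs_sq_eq]
    simp only [_root_.map_mul, _root_.map_sub, _root_.map_one, Complex.conj_conj]
    try dsimp only
    rw [Q2gen (z * conj z) (z * conj w) (w * conj z) (w * conj w) hA hB hC hD hbc]
    ring
  -- evaluate the sum
  rw [Finset.sum_range_succ, Finset.sum_range_succ, Finset.sum_range_succ,
    Finset.sum_range_zero, zero_add]
  rw [hQ0, hQ1, hQ2, iterD1 t x₀ hx0, iterD2 t x₀ hx0]
  have h0 : iterD (fun x => x⁻¹ * Real.exp (-t / x)) 0 x₀ = x₀⁻¹ * Real.exp (-t / x₀) := rfl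
  rw [h0]
  -- split the exponential
  have hexp : Real.exp (t * (1 - 1 / x₀)) = Real.exp t * Real.exp (-t / x₀) := by
    rw [← Real.exp_add]
    congr 1
    field_simp
    ring
  rw [hexp]
  simp only [Complex.ofReal_mul, Complex.ofReal_inv, Complex.ofReal_div,
    Complex.ofReal_sub, Complex.ofReal_pow]
  ring
end

section
/- Let 0 < r, let p ≥ 0 be an integer, and let w ∈ ℂ with |w|·r < 1. Then ∫_{|z|<r} [1/(π(1 − w\bar{z})²)] · z^p dA(z) = r^{2(p+1)} w^p, where dA denotes two-dimensional Lebesgue measure on the open disk of radius r. In particular, the integral operator on the disk of radius r with kernel K(w,z) = 1/(π(1 − w\bar{z})²) has the monomials z^p as eigenfunctions with eigenvalues r^{2p+2}. -/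
open ComplexConjugate MeasureTheory

open Complex Set

lemma thetaInt (k : ℤ) :
    ∫ θ : ℝ in Set.Ioo (-Real.pi) Real.pi, Complex.exp (k * θ * Complex.I)
      = if k = 0 then (2 * Real.pi : ℝ) else 0 := by
  rw [← MeasureTheory.integral_Ioc_eq_integral_Ioo,
    ← intervalIntegral.integral_of_le (by linarith [Real.pi_pos] : -Real.pi ≤ Real.pi)]
  rcases eq_or_ne k 0 with hk | hk
  · subst hk
    simp [Complex.ofReal_mul]
    ring
  · rw [if_neg hk]
    have hc : (k : ℂ) * Complex.I ≠ 0 := by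
      simp [Complex.I_ne_zero, hk]
    have : ∀ θ : ℝ, (k : ℂ) * θ * Complex.I = (k * Complex.I) * θ := by
      intro θ; ring
    simp_rw [this]
    rw [integral_exp_mul_complex hc]
    have h1 : Complex.exp ((k:ℂ) * Complex.I * Real.pi) = (-1 : ℂ) ^ k := by
      rw [show (k:ℂ) * Complex.I * Real.pi = k * (Real.pi * Complex.I) by ring,
        Complex.exp_int_mul, Complex.exp_pi_mul_I]
    have h2 : Complex.exp ((k:ℂ) * Complex.I * ((-Real.pi : ℝ) : ℂ)) = (-1 : ℂ) ^ k := by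
      rw [show (k:ℂ) * Complex.I * ((-Real.pi : ℝ) : ℂ) = ((-k : ℤ) : ℂ) * (Real.pi * Complex.I) by push_cast; ring,
        Complex.exp_int_mul, Complex.exp_pi_mul_I, zpow_neg, ← inv_zpow, inv_neg, inv_one]
    rw [h1, h2, sub_self, zero_div]
    norm_num

lemma monomialInt (r : ℝ) (hr : 0 < r) (n q : ℕ) :
    ∫ z in Metric.ball (0:ℂ) r, (conj z) ^ n * z ^ q
      = if n = q then ((Real.pi * r ^ (2 * q + 2) / (q + 1) : ℝ) : ℂ) else 0 := by
  have hmeas : MeasurableSet (Metric.ball (0:ℂ) r) := measurableSet_ball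
  rw [← MeasureTheory.integral_indicator hmeas,
    ← Complex.integral_comp_polarCoord_symm
      (Set.indicator (Metric.ball (0:ℂ) r) (fun z => (conj z) ^ n * z ^ q))]
  have hS : MeasurableSet (Set.Ioo (0:ℝ) r ×ˢ Set.Ioo (-Real.pi) Real.pi) :=
    measurableSet_Ioo.prod measurableSet_Ioo
  have key : ∀ x ∈ polarCoord.target,
      x.1 • (Set.indicator (Metric.ball (0:ℂ) r) (fun z => (conj z) ^ n * z ^ q))
          (Complex.polarCoord.symm x)
      = Set.indicator (Set.Ioo (0:ℝ) r ×ˢ Set.Ioo (-Real.pi) Real.pi)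
          (fun x => ((x.1 ^ (n + q + 1) : ℝ) : ℂ)
            * Complex.exp ((((q : ℤ) - n : ℤ) : ℂ) * x.2 * Complex.I)) x := by
    intro x hx
    rw [polarCoord_target] at hx
    obtain ⟨hx1, hx2⟩ := hx
    have hx1' : (0:ℝ) < x.1 := hx1
    by_cases hxr : x.1 < r
    · have hball : Complex.polarCoord.symm x ∈ Metric.ball (0:ℂ) r := by
        rw [Metric.mem_ball, dist_zero_right,
          Complex.norm_polarCoord_symm, abs_of_pos hx1']
        exact hxr
      have hmem : x ∈ Set.Ioo (0:ℝ) r ×ˢ Set.Ioo (-Real.pi) Real.pi := ⟨⟨hx1', hxr⟩, hx2⟩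
      rw [Set.indicator_of_mem hball, Set.indicator_of_mem hmem]
      rw [Complex.polarCoord_symm_apply, Complex.ofReal_cos, Complex.ofReal_sin,
        ← Complex.exp_mul_I]
      have hconj : conj ((x.1 : ℂ) * Complex.exp (x.2 * Complex.I))
          = (x.1 : ℂ) * Complex.exp ((x.2 : ℂ) * (-Complex.I)) := by
        rw [map_mul, Complex.conj_ofReal, ← Complex.exp_conj, map_mul, Complex.conj_ofReal,
          Complex.conj_I]
      rw [hconj, Complex.real_smul]
      calc (x.1 : ℂ) * (((x.1 : ℂ) * Complex.exp ((x.2 : ℂ) * (-Complex.I))) ^ n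
              * (((x.1 : ℂ)) * Complex.exp ((x.2 : ℂ) * Complex.I)) ^ q)
          = (x.1 : ℂ) ^ (n + q + 1) * (Complex.exp ((x.2 : ℂ) * (-Complex.I)) ^ n
              * Complex.exp ((x.2 : ℂ) * Complex.I) ^ q) := by ring
        _ = ((x.1 ^ (n + q + 1) : ℝ) : ℂ) * Complex.exp ((((q : ℤ) - n : ℤ) : ℂ) * x.2 * Complex.I) := by
            rw [← Complex.exp_nat_mul, ← Complex.exp_nat_mul, ← Complex.exp_add,
              Complex.ofReal_pow]
            congr 1
            push_cast
            ring
    · have hball : Complex.polarCoord.symm x ∉ Metric.ball (0:ℂ) r := by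
        rw [Metric.mem_ball, dist_zero_right,
          Complex.norm_polarCoord_symm, abs_of_pos hx1']
        exact fun h => hxr h
      have hS' : x ∉ Set.Ioo (0:ℝ) r ×ˢ Set.Ioo (-Real.pi) Real.pi := by
        intro h
        exact hxr h.1.2
      rw [Set.indicator_of_notMem hball, Set.indicator_of_notMem hS', smul_zero]
  rw [MeasureTheory.setIntegral_congr_fun polarCoord.open_target.measurableSet key,
    MeasureTheory.setIntegral_indicator hS,
    Set.inter_eq_self_of_subset_right
      (by
        rw [polarCoord_target]
        exact Set.prod_mono Set.Ioo_subset_Ioi_self subset_rfl),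
    Measure.volume_eq_prod ℝ ℝ]
  have hprod := MeasureTheory.setIntegral_prod_mul (μ := (volume : Measure ℝ))
    (ν := (volume : Measure ℝ)) (fun a : ℝ => ((a ^ (n + q + 1) : ℝ) : ℂ))
    (fun b : ℝ => Complex.exp ((((q : ℤ) - n : ℤ) : ℂ) * (b : ℂ) * Complex.I))
    (Set.Ioo (0:ℝ) r) (Set.Ioo (-Real.pi) Real.pi)
  rw [hprod]
  have hρ : ∫ x in Set.Ioo (0:ℝ) r, ((x ^ (n + q + 1) : ℝ) : ℂ)
      = ((r ^ (n + q + 2) / (n + q + 2) : ℝ) : ℂ) := by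
    rw [show (∫ x in Set.Ioo (0:ℝ) r, ((x ^ (n + q + 1) : ℝ) : ℂ))
        = ((∫ x in Set.Ioo (0:ℝ) r, x ^ (n + q + 1) : ℝ) : ℂ) from integral_ofReal,
      ← MeasureTheory.integral_Ioc_eq_integral_Ioo,
      ← intervalIntegral.integral_of_le hr.le, integral_pow]
    norm_num
    ring_nf
  rw [hρ, thetaInt ((q : ℤ) - n)]
  rcases eq_or_ne n q with h | h
  · subst h
    rw [if_pos (sub_self (n:ℤ)), if_pos rfl]
    have hpi : (Real.pi : ℂ) ≠ 0 := Complex.ofReal_ne_zero.mpr Real.pi_ne_zero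
    have hn1 : ((n : ℂ) + 1) ≠ 0 := by
      exact_mod_cast (Nat.cast_ne_zero (R := ℂ)).mpr (Nat.succ_ne_zero n)
    push_cast
    have h2 : ((n : ℂ) + n + 2) ≠ 0 := by
      have : ((n : ℂ) + n + 2) = 2 * ((n:ℂ) + 1) := by ring
      rw [this]
      exact mul_ne_zero two_ne_zero hn1
    field_simp
    ring_nf
    have h3 : (1 + (n:ℂ)) ≠ 0 := by rw [add_comm]; exact hn1
    field_simp
    ring
  · have hk : ((q : ℤ) - n) ≠ 0 := sub_ne_zero.mpr (fun hc => h (by exact_mod_cast hc.symm))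
    rw [if_neg hk, if_neg h, Complex.ofReal_zero, mul_zero]

/-- The monomials `z^p` are eigenfunctions, with eigenvalues `r^{2p+2}`, of the
integral operator on the disk of radius `r` with kernel `K(w,z) = 1/(π(1 − w z̄)²)`. -/
theorem stmt10 (r : ℝ) (hr : 0 < r) (p : ℕ) (w : ℂ) (hw : ‖w‖ * r < 1) :
    ∫ z in Metric.ball (0 : ℂ) r,
        (1 / ((Real.pi : ℂ) * (1 - w * conj z) ^ 2)) * z ^ p
      = ((r ^ (2 * (p + 1)) : ℝ) : ℂ) * w ^ p := by
  have hpi : (0:ℝ) < Real.pi := Real.pi_pos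
  have hpiC : (Real.pi : ℂ) ≠ 0 := Complex.ofReal_ne_zero.mpr hpi.ne'
  set q : ℝ := ‖w‖ * r with hq
  have hq0 : 0 ≤ q := mul_nonneg (norm_nonneg w) hr.le
  set c : ℕ → ℂ := fun n => ((n : ℂ) + 1) / (Real.pi : ℂ) * w ^ n with hc
  set F : ℕ → ℂ → ℂ := fun n z => c n * ((conj z) ^ n * z ^ p) with hF
  have hcont : ∀ n, Continuous (F n) := fun n =>
    continuous_const.mul ((Complex.continuous_conj.pow n).mul (continuous_pow p))
  have hint : ∀ n, IntegrableOn (F n) (Metric.ball (0:ℂ) r) volume := fun n =>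
    (((hcont n).locallyIntegrable).integrableOn_isCompact (isCompact_closedBall (0:ℂ) r)).mono_set
      Metric.ball_subset_closedBall
  have hptwise : ∀ z ∈ Metric.ball (0:ℂ) r,
      (1 / ((Real.pi : ℂ) * (1 - w * conj z) ^ 2)) * z ^ p = ∑' n, F n z := by
    intro z hz
    have hzr : ‖z‖ < r := by rwa [Metric.mem_ball, dist_zero_right] at hz
    set x : ℂ := w * conj z with hx
    have hxn : ‖x‖ < 1 := by
      have : ‖x‖ = ‖w‖ * ‖z‖ := by
        simp [hx, map_mul]
      rw [this]
      calc ‖w‖ * ‖z‖ ≤ ‖w‖ * r := by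
            exact mul_le_mul_of_nonneg_left hzr.le (norm_nonneg w)
        _ < 1 := hw
    have h1x : (1 : ℂ) - x ≠ 0 := by
      intro h0
      rw [sub_eq_zero] at h0
      rw [← h0] at hxn
      simp at hxn
    have hs1 : HasSum (fun n : ℕ => ((n:ℂ) + 1) * x ^ n) (1 / (1 - x) ^ 2) := by
      have A := hasSum_coe_mul_geometric_of_norm_lt_one hxn
      have B := hasSum_geometric_of_norm_lt_one hxn
      convert A.add B using 1
      · rfl
      · funext n; ring
      · field_simp
        ring
    have hs2 : HasSum (fun n => F n z) ((1 / (1 - x) ^ 2) * (z ^ p / (Real.pi : ℂ))) := by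
      convert hs1.mul_right (z ^ p / (Real.pi : ℂ)) using 1
      · rfl
      funext n
      simp only [hF, hc, hx, mul_pow]
      field_simp
    rw [hs2.tsum_eq]
    field_simp
  rw [MeasureTheory.setIntegral_congr_fun measurableSet_ball hptwise]
  have hnorm : Summable fun n => ∫ z in Metric.ball (0:ℂ) r, ‖F n z‖ := by
    set B : ℝ := r ^ p * (volume (Metric.ball (0:ℂ) r)).toReal / Real.pi with hB
    have hcn : ∀ n : ℕ, ‖c n‖ = ((n:ℝ)+1)/Real.pi * ‖w‖ ^ n := by
      intro n
      simp only [hc, norm_div, norm_mul, norm_pow]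
      rw [show ((n:ℂ)+1) = ((n+1:ℕ):ℂ) by push_cast; ring]
      rw [Complex.norm_natCast, Complex.norm_real, Real.norm_eq_abs, abs_of_pos hpi]
      push_cast
      ring
    have hbound : ∀ n, (∫ z in Metric.ball (0:ℂ) r, ‖F n z‖) ≤ (((n:ℝ)+1) * q ^ n) * B := by
      intro n
      have hle : ∀ z ∈ Metric.ball (0:ℂ) r, ‖F n z‖ ≤ ‖c n‖ * r ^ (n + p) := by
        intro z hz
        have hzr : ‖z‖ ≤ r := le_of_lt (by rwa [Metric.mem_ball, dist_zero_right] at hz)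
        calc ‖F n z‖ = ‖c n‖ * (‖z‖ ^ n * ‖z‖ ^ p) := by
              simp [hF, norm_mul, norm_pow, RCLike.norm_conj]
          _ ≤ ‖c n‖ * (r ^ n * r ^ p) := by
              gcongr <;> exact hzr
          _ = ‖c n‖ * r ^ (n+p) := by rw [pow_add]
      calc (∫ z in Metric.ball (0:ℂ) r, ‖F n z‖)
          ≤ ∫ _z in Metric.ball (0:ℂ) r, ‖c n‖ * r ^ (n+p) :=
            MeasureTheory.setIntegral_mono_on (hint n).norm
              (MeasureTheory.integrableOn_const measure_ball_lt_top.ne)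
              measurableSet_ball hle
        _ = ‖c n‖ * r ^ (n+p) * (volume (Metric.ball (0:ℂ) r)).toReal := by
            rw [MeasureTheory.setIntegral_const, smul_eq_mul, Measure.real]
            ring
        _ = (((n:ℝ)+1) * q ^ n) * B := by
            rw [hcn n, hB, hq, pow_add, mul_pow]
            field_simp
    refine Summable.of_nonneg_of_le
      (fun n => MeasureTheory.integral_nonneg (fun z => norm_nonneg _)) hbound ?_
    have hq1 : q < 1 := hw
    have hsum1 : Summable (fun n : ℕ => ((n:ℝ)+1) * q ^ n) := by
      have A := summable_pow_mul_geometric_of_norm_lt_one 1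
        (show ‖q‖ < 1 by rwa [Real.norm_eq_abs, _root_.abs_of_nonneg hq0])
      have B := summable_geometric_of_lt_one hq0 hq1
      exact (A.add B).congr (fun n => by push_cast; ring)
    exact hsum1.mul_right B
  rw [← (MeasureTheory.hasSum_integral_of_summable_integral_norm hint hnorm).tsum_eq]
  have hterm : ∀ n, (∫ z in Metric.ball (0:ℂ) r, F n z)
      = if n = p then ((r ^ (2 * (p + 1)) : ℝ) : ℂ) * w ^ p else 0 := by
    intro n
    have : (∫ z in Metric.ball (0:ℂ) r, F n z)
        = c n * ∫ z in Metric.ball (0:ℂ) r, (conj z) ^ n * z ^ p :=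
      MeasureTheory.integral_const_mul _ _
    rw [this, monomialInt r hr n p]
    rcases eq_or_ne n p with h | h
    · subst h
      rw [if_pos rfl, if_pos rfl, hc]
      have hn1 : ((n : ℂ) + 1) ≠ 0 := by
        exact_mod_cast (Nat.cast_ne_zero (R := ℂ)).mpr (Nat.succ_ne_zero n)
      rw [show 2 * (n + 1) = 2 * n + 2 by ring]
      push_cast
      field_simp
    · rw [if_neg h, if_neg h, mul_zero]
  rw [tsum_congr hterm, tsum_ite_eq]
end
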